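/- For any η > 0 and any t, x ∈ ℝ, the integral ∫_ℝ e^{2πiux} (1 - e^{-2πiut}) · e^{-2πη|u|}/(2|u|) du equals (1/2) log( ((x-t)² + η²)/(x² + η²) ). -/

import Mathlib

open Real MeasureTheory

open Set Filter

lemma cos_sub_one_eq (θ : ℝ) : Real.cos θ - 1 = -(2 * Real.sin (θ/2)^2) := by
  have h := Real.cos_sub_cos θ 0
  simp only [Real.cos_zero, add_zero, sub_zero] at h
  rw [h]; ring

lemma abs_cos_sub_one_le (θ : ℝ) : |Real.cos θ - 1| ≤ |θ| := by
  rw [cos_sub_one_eq, abs_neg]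
  have h1 : |Real.sin (θ/2)| ≤ |θ/2| := Real.abs_sin_le_abs
  have h2 : |Real.sin (θ/2)| ≤ 1 := Real.abs_sin_le_one _
  have h3 : (0:ℝ) ≤ |Real.sin (θ/2)| := abs_nonneg _
  have : |2 * Real.sin (θ/2)^2| = 2 * |Real.sin (θ/2)|^2 := by
    rw [abs_mul, abs_of_nonneg (by norm_num : (0:ℝ) ≤ (2:ℝ)), sq_abs, abs_pow]
    simp [sq_abs]
  rw [this]
  have : |θ| = 2 * |θ/2| := by rw [abs_div]; simp [abs_of_nonneg]; ring
  rw [this]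
  nlinarith

lemma frullani_integrableOn {η : ℝ} (hη : 0 < η) (a : ℝ) :
    IntegrableOn (fun u : ℝ => (Real.cos (2*π*u*a) - 1) * Real.exp (-(2*π*η*u)) / u)
      (Ioi (0:ℝ)) := by
  apply Integrable.mono' (g := fun u : ℝ => (2*π*|a|) * Real.exp (-(2*π*η)*u))
  · exact (exp_neg_integrableOn_Ioi 0 (by positivity)).const_mul _
  · apply Measurable.aestronglyMeasurable
    fun_prop
  · filter_upwards [ae_restrict_mem measurableSet_Ioi] with u hu
    have hu0 : (0:ℝ) < u := hu
    rw [norm_div, norm_mul, Real.norm_eq_abs, Real.norm_eq_abs, Real.norm_eq_abs,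
      abs_of_pos (Real.exp_pos _), abs_of_pos hu0]
    have h1 : |Real.cos (2*π*u*a) - 1| ≤ 2*π*u*|a| := by
      have := abs_cos_sub_one_le (2*π*u*a)
      calc |Real.cos (2*π*u*a) - 1| ≤ |2*π*u*a| := this
        _ = 2*π*u*|a| := by
            rw [abs_mul, abs_of_pos (by positivity : (0:ℝ) < 2*π*u)]
    rw [div_le_iff₀ hu0]
    calc |Real.cos (2*π*u*a) - 1| * Real.exp (-(2*π*η*u))
        ≤ (2*π*u*|a|) * Real.exp (-(2*π*η*u)) := by
          exact mul_le_mul_of_nonneg_right h1 (Real.exp_pos _).le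
      _ = 2*π*|a| * Real.exp (-(2*π*η)*u) * u := by ring_nf

lemma sinExpInt' (b : ℝ) {c : ℝ} (hc : 0 < c) :
    ∫ u in Ioi (0:ℝ), Real.exp (-(c*u)) * Real.sin (b*u) = b / (c^2 + b^2) := by
  have hden : (0:ℝ) < c^2 + b^2 := by positivity
  set F : ℝ → ℝ := fun u =>
    -(Real.exp (-(c*u)) * (c * Real.sin (b*u) + b * Real.cos (b*u)) / (c^2+b^2)) with hF
  have hd : ∀ u : ℝ, HasDerivAt F (Real.exp (-(c*u)) * Real.sin (b*u)) u := by
    intro u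
    have h1 : HasDerivAt (fun u : ℝ => -(c*u)) (-c) u := by
      have := ((hasDerivAt_id u).const_mul c).neg; simp only [mul_one] at this; exact this
    have he : HasDerivAt (fun u : ℝ => Real.exp (-(c*u))) (Real.exp (-(c*u)) * (-c)) u :=
      (Real.hasDerivAt_exp _).comp u h1
    have hb1 : HasDerivAt (fun u : ℝ => b*u) b u := by
      simpa using (hasDerivAt_id u).const_mul b
    have hs : HasDerivAt (fun u : ℝ => Real.sin (b*u)) (Real.cos (b*u) * b) u :=
      (Real.hasDerivAt_sin _).comp u hb1
    have hc2 : HasDerivAt (fun u : ℝ => Real.cos (b*u)) (-Real.sin (b*u) * b) u :=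
      (Real.hasDerivAt_cos _).comp u hb1
    have H := ((he.mul ((hs.const_mul c).add (hc2.const_mul b))).div_const (c^2+b^2)).neg
    refine H.congr_deriv ?_
    simp only [Pi.add_apply]
    field_simp
    ring
  have hT : Tendsto F atTop (nhds 0) := by
    have hexp : Tendsto (fun u : ℝ => Real.exp (-(c*u))) atTop (nhds 0) := by
      have h2 : Tendsto (fun u : ℝ => c*u) atTop atTop :=
        Tendsto.const_mul_atTop hc tendsto_id
      exact Real.tendsto_exp_neg_atTop_nhds_zero.comp h2
    have hbnd : ∀ u : ℝ, ‖F u‖ ≤ Real.exp (-(c*u)) * ((c + |b|)/(c^2+b^2)) := by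
      intro u
      have s1 := Real.abs_sin_le_one (b*u)
      have c1 := Real.abs_cos_le_one (b*u)
      have h3 : |c * Real.sin (b*u) + b * Real.cos (b*u)| ≤ c + |b| := by
        calc |c * Real.sin (b*u) + b * Real.cos (b*u)|
            ≤ |c * Real.sin (b*u)| + |b * Real.cos (b*u)| := abs_add_le _ _
          _ ≤ c + |b| := by
              rw [abs_mul, abs_mul, abs_of_pos hc]
              nlinarith [abs_nonneg b, abs_nonneg (Real.sin (b*u)), abs_nonneg (Real.cos (b*u))]
      have hFu : ‖F u‖ = Real.exp (-(c*u)) * |c * Real.sin (b*u) + b * Real.cos (b*u)| / (c^2+b^2) := by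
        rw [hF]
        simp only [Real.norm_eq_abs]
        rw [abs_neg, abs_div, abs_mul, abs_of_pos (Real.exp_pos _), abs_of_pos hden]
      rw [hFu, mul_div_assoc]
      exact mul_le_mul_of_nonneg_left (by gcongr) (Real.exp_pos _).le
    exact squeeze_zero_norm hbnd (by simpa using hexp.mul_const ((c + |b|)/(c^2+b^2)))
  have hint : IntegrableOn (fun u : ℝ => Real.exp (-(c*u)) * Real.sin (b*u)) (Ioi 0) := by
    apply Integrable.mono' (g := fun u : ℝ => Real.exp (-c*u))
    · exact exp_neg_integrableOn_Ioi 0 hc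
    · exact ((Real.continuous_exp.comp (continuous_const.mul continuous_id).neg).mul
        (Real.continuous_sin.comp (continuous_const.mul continuous_id))).aestronglyMeasurable
    · filter_upwards with u
      rw [norm_mul, Real.norm_eq_abs, Real.norm_eq_abs, abs_of_pos (Real.exp_pos _), neg_mul]
      calc Real.exp (-(c*u)) * |Real.sin (b*u)| ≤ Real.exp (-(c*u)) * 1 := by
            exact mul_le_mul_of_nonneg_left (Real.abs_sin_le_one _) (Real.exp_pos _).le
        _ = Real.exp (-(c*u)) := mul_one _
  have := integral_Ioi_of_hasDerivAt_of_tendsto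
    ((hd 0).continuousAt.continuousWithinAt) (fun u _ => hd u) hint hT
  rw [this, hF]
  simp only [mul_zero, neg_zero, Real.exp_zero, Real.sin_zero, Real.cos_zero]
  field_simp
  ring

lemma frullani_hasDerivAt {η : ℝ} (hη : 0 < η) (a₀ : ℝ) :
    HasDerivAt (fun a : ℝ => ∫ u in Ioi (0:ℝ),
        (Real.cos (2*π*u*a) - 1) * Real.exp (-(2*π*η*u)) / u)
      (-(a₀/(a₀^2+η^2))) a₀ := by
  set F : ℝ → ℝ → ℝ := fun a u => (Real.cos (2*π*u*a) - 1) * Real.exp (-(2*π*η*u)) / u with hFdef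
  set F' : ℝ → ℝ → ℝ := fun a u => -Real.sin (2*π*u*a) * (2*π) * Real.exp (-(2*π*η*u)) with hF'def
  have key := hasDerivAt_integral_of_dominated_loc_of_deriv_le (μ := volume.restrict (Ioi 0))
    (F := F) (F' := F') (x₀ := a₀) (bound := fun u => 2*π*Real.exp (-(2*π*η*u)))
    (s := Metric.ball a₀ 1) (Metric.ball_mem_nhds a₀ one_pos)
    (by
      filter_upwards with a
      apply Measurable.aestronglyMeasurable
      fun_prop)
    (frullani_integrableOn hη a₀)
    (by
      apply Measurable.aestronglyMeasurable
      fun_prop)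
    (by
      filter_upwards [ae_restrict_mem measurableSet_Ioi] with u hu a _
      simp only [hF'def]
      rw [Real.norm_eq_abs, abs_mul, abs_mul, abs_neg,
        abs_of_pos (Real.exp_pos _), abs_of_pos (by positivity : (0:ℝ) < 2*π)]
      have : |Real.sin (2*π*u*a)| ≤ 1 := Real.abs_sin_le_one _
      have h4 : |Real.sin (2*π*u*a)| * (2*π) ≤ 1 * (2*π) :=
        mul_le_mul_of_nonneg_right this (by positivity)
      exact le_trans (mul_le_mul_of_nonneg_right h4 (Real.exp_pos _).le)
        (le_of_eq (by ring)))
    (IntegrableOn.congr_fun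
      ((exp_neg_integrableOn_Ioi 0 (by positivity : (0:ℝ) < 2*π*η)).const_mul (2*π))
      (fun u _ => by ring_nf) measurableSet_Ioi)
    (by
      filter_upwards [ae_restrict_mem measurableSet_Ioi] with u hu a _
      have hu0 : (0:ℝ) < u := hu
      have h1 : HasDerivAt (fun a : ℝ => 2*π*u*a) (2*π*u) a := by
        simpa using (hasDerivAt_id a).const_mul (2*π*u)
      have hcos : HasDerivAt (fun a : ℝ => Real.cos (2*π*u*a))
          (-Real.sin (2*π*u*a) * (2*π*u)) a := (Real.hasDerivAt_cos _).comp a h1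
      have := ((hcos.sub_const 1).mul_const (Real.exp (-(2*π*η*u)))).div_const u
      refine this.congr_deriv ?_
      rw [hF'def]
      field_simp)
  have heq : ∫ u in Ioi (0:ℝ), F' a₀ u = -(a₀/(a₀^2+η^2)) := by
    have e1 : ∀ u : ℝ, F' a₀ u = (-(2*π)) * (Real.exp (-((2*π*η)*u)) * Real.sin ((2*π*a₀)*u)) := by
      intro u
      simp only [hF'def]
      rw [show 2*π*u*a₀ = 2*π*a₀*u by ring]
      ring
    simp_rw [e1]
    rw [MeasureTheory.integral_const_mul, sinExpInt' (2*π*a₀) (by positivity : (0:ℝ) < 2*π*η)]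
    have hd1 : (0:ℝ) < (2*π*η)^2 + (2*π*a₀)^2 := by positivity
    have hd2 : (0:ℝ) < a₀^2+η^2 := by positivity
    field_simp
    ring
  rw [← heq]
  exact key.2

lemma frullani_value {η : ℝ} (hη : 0 < η) (a : ℝ) :
    ∫ u in Ioi (0:ℝ), (Real.cos (2*π*u*a) - 1) * Real.exp (-(2*π*η*u)) / u
      = -(1/2) * Real.log ((a^2+η^2)/η^2) := by
  set J : ℝ → ℝ := fun a => ∫ u in Ioi (0:ℝ),
      (Real.cos (2*π*u*a) - 1) * Real.exp (-(2*π*η*u)) / u with hJ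
  set φ : ℝ → ℝ := fun a => -(1/2) * Real.log ((a^2+η^2)/η^2) with hφdef
  have hφ : ∀ a : ℝ, HasDerivAt φ (-(a/(a^2+η^2))) a := by
    intro a
    have hpos : (0:ℝ) < a^2+η^2 := by positivity
    have hη2 : (η:ℝ)^2 ≠ 0 := by positivity
    have hφeq : φ = fun a : ℝ => -(1/2) * (Real.log (a^2+η^2) - Real.log (η^2)) := by
      funext b
      simp only [hφdef]
      rw [Real.log_div (by positivity) hη2]
    rw [hφeq]
    have hlog : HasDerivAt (fun a : ℝ => Real.log (a^2+η^2)) ((a^2+η^2)⁻¹ * (2*a)) a := by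
      have hin : HasDerivAt (fun a : ℝ => a^2+η^2) (2*a) a := by
        simpa using (hasDerivAt_pow 2 a).add_const (η^2)
      exact (Real.hasDerivAt_log (ne_of_gt hpos)).comp a hin
    have := (hlog.sub_const (Real.log (η^2))).const_mul (-(1/2:ℝ))
    refine this.congr_deriv ?_
    field_simp
  have hfinal : ∀ a : ℝ, J a - φ a = J 0 - φ 0 := by
    intro a
    apply is_const_of_deriv_eq_zero (f := fun a => J a - φ a)
    · intro b
      exact ((frullani_hasDerivAt hη b).sub (hφ b)).differentiableAt
    · intro b
      rw [HasDerivAt.deriv (f := fun a => J a - φ a) ((frullani_hasDerivAt hη b).sub (hφ b))]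
      ring
  have hJ0 : J 0 = 0 := by
    rw [hJ]
    simp
  have hφ0 : φ 0 = 0 := by
    rw [hφdef]
    simp only [ne_eq, OfNat.ofNat_ne_zero, not_false_eq_true, zero_pow, zero_add]
    rw [div_self (by positivity : (η:ℝ)^2 ≠ 0), Real.log_one]
    ring
  have := hfinal a
  rw [hJ0, hφ0] at this
  have : J a = φ a := by linarith
  exact this

lemma cexp_ofReal_mul_I (θ : ℝ) :
    Complex.exp ((θ:ℂ) * Complex.I) = (Real.cos θ : ℂ) + (Real.sin θ : ℂ) * Complex.I := by
  rw [Complex.exp_mul_I, Complex.ofReal_cos, Complex.ofReal_sin]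

lemma cexp_neg_ofReal_mul_I (θ : ℝ) :
    Complex.exp (-((θ:ℂ) * Complex.I)) = (Real.cos θ : ℂ) - (Real.sin θ : ℂ) * Complex.I := by
  have : -((θ:ℂ) * Complex.I) = ((-θ : ℝ) : ℂ) * Complex.I := by push_cast; ring
  rw [this, cexp_ofReal_mul_I, Real.cos_neg, Real.sin_neg]
  push_cast
  ring

lemma norm_one_sub_cexp_le (θ : ℝ) :
    ‖1 - Complex.exp (-((θ:ℂ) * Complex.I))‖ ≤ |θ| := by
  rw [cexp_neg_ofReal_mul_I]
  have heq : (1:ℂ) - ((Real.cos θ : ℂ) - (Real.sin θ : ℂ) * Complex.I)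
      = ((1 - Real.cos θ : ℝ) : ℂ) + ((Real.sin θ : ℝ) : ℂ) * Complex.I := by
    push_cast; ring
  rw [heq, Complex.norm_add_mul_I]
  rw [show |θ| = Real.sqrt (θ^2) from (Real.sqrt_sq_eq_abs θ).symm]
  apply Real.sqrt_le_sqrt
  have h1 : Real.sin θ ^ 2 = 1 - Real.cos θ ^ 2 := by
    have := Real.sin_sq_add_cos_sq θ; linarith
  have h2 : Real.cos θ - 1 = -(2 * Real.sin (θ/2)^2) := cos_sub_one_eq θ
  have h3 : Real.sin (θ/2)^2 ≤ (θ/2)^2 := Real.sin_sq_le_sq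
  nlinarith [Real.sin_sq_le_one θ, Real.cos_sq_le_one θ]

lemma integrableOn_comp_neg_iff {E : Type*} [NormedAddCommGroup E] (f : ℝ → E) {s : Set ℝ}
    (hs : MeasurableSet s) :
    IntegrableOn (fun u => f (-u)) s volume ↔ IntegrableOn f ((fun x : ℝ => -x) ⁻¹' s) volume := by
  have A : MeasurableEmbedding (fun x : ℝ => -x) :=
    (Homeomorph.neg ℝ).isClosedEmbedding.measurableEmbedding
  rw [IntegrableOn, IntegrableOn,
    show volume.restrict s
        = Measure.map (fun x : ℝ => -x) (volume.restrict ((fun x : ℝ => -x) ⁻¹' s)) by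
      rw [← Measure.restrict_map measurable_neg hs, Measure.map_neg_eq_self],
    A.integrable_map_iff]
  simp [Function.comp_def]

lemma integrable_exp_neg_mul_abs {c : ℝ} (hc : 0 < c) :
    Integrable (fun u : ℝ => Real.exp (-(c*|u|))) := by
  have hIoi : IntegrableOn (fun u : ℝ => Real.exp (-(c*|u|))) (Ioi 0) := by
    apply IntegrableOn.congr_fun (exp_neg_integrableOn_Ioi 0 hc) ?_ measurableSet_Ioi
    intro u hu
    simp only []
    rw [abs_of_pos hu]
    ring_nf
  have hIic : IntegrableOn (fun u : ℝ => Real.exp (-(c*|u|))) (Iic 0) := by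
    have h2 : IntegrableOn (fun u : ℝ => Real.exp (-(c*|(-u)|))) (Iic 0) volume := by
      rw [integrableOn_comp_neg_iff (fun u : ℝ => Real.exp (-(c*|u|))) measurableSet_Iic]
      have : (fun x : ℝ => -x) ⁻¹' (Iic 0) = Ici 0 := by
        ext y; simp [neg_nonpos]
      rw [this]
      exact Iff.mpr integrableOn_Ici_iff_integrableOn_Ioi hIoi
    simpa [abs_neg] using h2
  rw [← integrableOn_univ, ← Iic_union_Ioi (a := (0:ℝ))]
  exact hIic.union hIoi

/-- Frullani-type Fourier identity: for η > 0 and t, x ∈ ℝ,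
∫_ℝ e^{2πiux}(1 - e^{-2πiut}) e^{-2πη|u|}/(2|u|) du
  = (1/2) log(((x-t)² + η²)/(x² + η²)). -/
theorem frullani_fourier_identity (η t x : ℝ) (hη : 0 < η) :
    ∫ u : ℝ,
        Complex.exp (((2 * π * u * x : ℝ) : ℂ) * Complex.I) *
          (1 - Complex.exp (-(((2 * π * u * t : ℝ) : ℂ) * Complex.I))) *
          ((Real.exp (-(2 * π * η * |u|)) / (2 * |u|) : ℝ) : ℂ)
      = (((1 / 2) * Real.log (((x - t) ^ 2 + η ^ 2) / (x ^ 2 + η ^ 2)) : ℝ) : ℂ) := by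
  set f : ℝ → ℂ := fun u =>
    Complex.exp (((2 * π * u * x : ℝ) : ℂ) * Complex.I) *
      (1 - Complex.exp (-(((2 * π * u * t : ℝ) : ℂ) * Complex.I))) *
      ((Real.exp (-(2 * π * η * |u|)) / (2 * |u|) : ℝ) : ℂ) with hf
  -- integrability of f
  have hmeas : AEStronglyMeasurable f volume := by
    apply Measurable.aestronglyMeasurable
    rw [hf]
    fun_prop
  have hbound : ∀ u : ℝ, ‖f u‖ ≤ π * |t| * Real.exp (-(2 * π * η * |u|)) := by
    intro u
    simp only [hf]
    rw [norm_mul, norm_mul, Complex.norm_exp_ofReal_mul_I, one_mul]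
    have h2 : ‖((Real.exp (-(2 * π * η * |u|)) / (2 * |u|) : ℝ) : ℂ)‖
        = Real.exp (-(2 * π * η * |u|)) / (2 * |u|) := by
      rw [Complex.norm_real, Real.norm_eq_abs, abs_of_nonneg (by positivity)]
    rw [h2]
    rcases eq_or_ne u 0 with rfl | hu
    · simp only [abs_zero, mul_zero, div_zero]
      positivity
    · have h3 : ‖1 - Complex.exp (-(((2 * π * u * t : ℝ) : ℂ) * Complex.I))‖ ≤ |2 * π * u * t| :=
        norm_one_sub_cexp_le _
      have habs : |2 * π * u * t| = 2 * π * |u| * |t| := by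
        rw [abs_mul, abs_mul, abs_mul, abs_two, abs_of_pos Real.pi_pos]
      have hu' : |u| ≠ 0 := abs_ne_zero.mpr hu
      calc ‖1 - Complex.exp (-(((2 * π * u * t : ℝ) : ℂ) * Complex.I))‖ *
            (Real.exp (-(2 * π * η * |u|)) / (2 * |u|))
          ≤ (2 * π * |u| * |t|) * (Real.exp (-(2 * π * η * |u|)) / (2 * |u|)) :=
            mul_le_mul_of_nonneg_right (h3.trans_eq habs) (by positivity)
        _ = π * |t| * Real.exp (-(2 * π * η * |u|)) := by
            field_simp
  have hg : Integrable (fun u : ℝ => π * |t| * Real.exp (-(2 * π * η * |u|))) :=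
    (integrable_exp_neg_mul_abs (by positivity : (0:ℝ) < 2 * π * η)).const_mul _
  have hInt : Integrable f := hg.mono' hmeas (Filter.Eventually.of_forall hbound)
  -- split the integral
  have hIoiNeg : IntegrableOn (fun u => f (-u)) (Ioi (0:ℝ)) := by
    rw [integrableOn_comp_neg_iff f measurableSet_Ioi]
    have hs : (fun x : ℝ => -x) ⁻¹' (Ioi 0) = Iio 0 := by
      ext y; simp [neg_pos]
    rw [hs]
    exact hInt.integrableOn
  have hsplit : ∫ u : ℝ, f u = ∫ u in Ioi (0:ℝ), (f (-u) + f u) := by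
    rw [← intervalIntegral.integral_Iic_add_Ioi hInt.integrableOn hInt.integrableOn]
    rw [show Iic (0:ℝ) = Iic (-0 : ℝ) by norm_num]
    rw [← integral_comp_neg_Ioi]
    rw [← integral_add hIoiNeg hInt.integrableOn]
  -- pointwise identity on (0, ∞)
  set G : ℝ → ℝ := fun u =>
    (Real.cos (2*π*u*x) - 1) * Real.exp (-(2*π*η*u)) / u
      - (Real.cos (2*π*u*(x-t)) - 1) * Real.exp (-(2*π*η*u)) / u with hG
  have hpt : ∀ u ∈ Ioi (0:ℝ), f (-u) + f u = ((G u : ℝ) : ℂ) := by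
    intro u hu
    have hu0 : (0:ℝ) < u := hu
    simp only [hf, hG]
    rw [abs_neg, abs_of_pos hu0]
    rw [show (2*π*(-u)*x : ℝ) = -(2*π*u*x) by ring,
        show (2*π*(-u)*t : ℝ) = -(2*π*u*t) by ring,
        show (2*π*u*(x-t) : ℝ) = 2*π*u*x - 2*π*u*t by ring]
    rw [Real.cos_sub]
    simp only [Complex.ofReal_neg, neg_mul, neg_neg, cexp_ofReal_mul_I, cexp_neg_ofReal_mul_I]
    push_cast
    have hI := Complex.I_sq
    have huC : (u:ℂ) ≠ 0 := by exact_mod_cast ne_of_gt hu0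
    field_simp
    linear_combination (norm := (push_cast; ring1)) (2 * (Real.sin (2*π*u*x) : ℂ) *
      (Real.sin (2*π*u*t) : ℂ)) * hI
  have hcongr : ∫ u in Ioi (0:ℝ), (f (-u) + f u) = ∫ u in Ioi (0:ℝ), ((G u : ℝ) : ℂ) :=
    setIntegral_congr_fun measurableSet_Ioi hpt
  -- evaluate the real integral
  have hreal : ∫ u in Ioi (0:ℝ), G u
      = (1/2) * Real.log (((x - t) ^ 2 + η ^ 2) / (x ^ 2 + η ^ 2)) := by
    rw [hG]
    rw [integral_sub (frullani_integrableOn hη x) (frullani_integrableOn hη (x-t))]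
    rw [frullani_value hη x, frullani_value hη (x-t)]
    have p1 : (0:ℝ) < x^2 + η^2 := by positivity
    have p2 : (0:ℝ) < (x-t)^2 + η^2 := by positivity
    have p3 : (η:ℝ)^2 ≠ 0 := by positivity
    rw [Real.log_div (ne_of_gt p1) p3, Real.log_div (ne_of_gt p2) p3,
      Real.log_div (ne_of_gt p2) (ne_of_gt p1)]
    ring
  rw [hsplit, hcongr, ← hreal]
  exact integral_ofReal
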